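/- Let P be the lazy random walk transition matrix on a finite connected graph G = (V,E) with m edges, stationary distribution π(u) = d_u/(2m), and for A ⊆ V let Q(A, V∖A) = Σ_{u∈A, v∉A} π(u)P(u,v). Fix a labelling of V as {1,…,n} and a function g : V → ℝ with 0 = g(1) ≤ g(2) ≤ ⋯ ≤ g(n) = 1. Then 1 ≤ E_P(g,g) · Σ_{j=1}^{n−1} 1/Q([j], V∖[j]), where [j] = {1,…,j}, provided Q([j], V∖[j]) > 0 for all j. -/

import Mathlib

open Finset

/-- Transition matrix of the lazy random walk on a graph. -/
noncomputable def lazyWalk {V : Type*} [Fintype V] [DecidableEq V]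
    (G : SimpleGraph V) [DecidableRel G.Adj] : V → V → ℝ :=
  fun u v => if u = v then 1/2 else if G.Adj u v then 1/(2 * G.degree u) else 0

theorem stmt_11 (n : ℕ) (hn : 2 ≤ n) (G : SimpleGraph (Fin n))
    [DecidableRel G.Adj] (hconn : G.Connected)
    (m : ℕ) (hm : m = G.edgeFinset.card)
    (π : Fin n → ℝ) (hπ : ∀ u, π u = (G.degree u : ℝ) / (2 * m))
    (g : Fin n → ℝ) (hmono : Monotone g)
    (hg0 : g ⟨0, by omega⟩ = 0) (hgn : g ⟨n - 1, by omega⟩ = 1)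
    (Q : ℕ → ℝ)
    (hQ : ∀ j, Q j = ∑ u ∈ Finset.univ.filter (fun v : Fin n => v.val < j),
        ∑ v ∈ Finset.univ.filter (fun v : Fin n => ¬ v.val < j),
          π u * lazyWalk G u v)
    (hQpos : ∀ j ∈ Finset.Icc 1 (n - 1), 0 < Q j) :
    1 ≤ ((1/2) * ∑ u, ∑ v, (g u - g v) ^ 2 * π u * lazyWalk G u v) *
        ∑ j ∈ Finset.Icc 1 (n - 1), 1 / Q j := by
  -- the weight function
  set w : Fin n → Fin n → ℝ := fun u v => π u * lazyWalk G u v with hw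
  have hwnn : ∀ u v, 0 ≤ w u v := by
    intro u v
    apply mul_nonneg
    · rw [hπ]; positivity
    · unfold lazyWalk
      split_ifs <;> positivity
  have hwsymm : ∀ u v, w u v = w v u := by
    intro u v
    by_cases huv : u = v
    · rw [huv]
    · have huv' : v ≠ u := fun h => huv h.symm
      by_cases hadj : G.Adj u v
      · have hdu : 0 < G.degree u := by
          rw [G.degree_pos_iff_exists_adj]; exact ⟨v, hadj⟩
        have hdv : 0 < G.degree v := by
          rw [G.degree_pos_iff_exists_adj]; exact ⟨u, hadj.symm⟩
        have hdu' : (G.degree u : ℝ) ≠ 0 := Nat.cast_ne_zero.mpr hdu.ne'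
        have hdv' : (G.degree v : ℝ) ≠ 0 := Nat.cast_ne_zero.mpr hdv.ne'
        simp only [hw, lazyWalk, if_neg huv, if_neg huv', if_pos hadj,
          if_pos hadj.symm, hπ]
        have hmpos : 0 < m := by
          rw [hm]
          exact Finset.card_pos.mpr ⟨_, SimpleGraph.mem_edgeFinset.mpr ((SimpleGraph.mem_edgeSet G).mpr hadj)⟩
        have hm' : (m:ℝ) ≠ 0 := Nat.cast_ne_zero.mpr hmpos.ne'
        field_simp
      · have hadj' : ¬ G.Adj v u := fun h => hadj h.symm
        simp only [hw, lazyWalk, if_neg huv, if_neg huv', if_neg hadj, if_neg hadj',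
          mul_zero]
  -- the increments
  set f : ℕ → ℝ := fun i => g ⟨min i (n-1), by omega⟩ with hf
  set d : ℕ → ℝ := fun j => f j - f (j-1) with hd
  have hdnn : ∀ j, 1 ≤ j → 0 ≤ d j := by
    intro j hj
    simp only [hd]
    have : f (j-1) ≤ f j := by
      apply hmono
      simp only [Fin.mk_le_mk]
      omega
    linarith
  -- telescoping
  have htel : ∀ a b : ℕ, a ≤ b → ∑ j ∈ Finset.Icc (a+1) b, d j = f b - f a := by
    intro a b hab
    rw [← Finset.Ico_add_one_right_eq_Icc, Finset.sum_Ico_eq_sum_range]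
    have hb : b + 1 - (a + 1) = b - a := by omega
    rw [hb]
    have : ∀ i ∈ Finset.range (b - a), d (a + 1 + i) = f (a + (i+1)) - f (a + i) := by
      intro i _
      simp only [hd]
      congr 2 <;> omega
    rw [Finset.sum_congr rfl this, Finset.sum_range_sub (fun i => f (a + i))]
    congr 2
    omega
  have hsum1 : ∑ j ∈ Finset.Icc 1 (n-1), d j = 1 := by
    have := htel 0 (n-1) (by omega)
    simp only [zero_add] at this
    rw [this]
    have h1 : f (n-1) = 1 := by
      simp only [hf, min_self]; exact hgn
    have h0 : f 0 = 0 := by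
      simp only [hf, Nat.zero_min]
      exact hg0
    rw [h1, h0]; ring
  -- telescoping between two vertices
  have htel2 : ∀ u v : Fin n, u.val < v.val →
      ∑ j ∈ Finset.Icc (u.val+1) v.val, d j = g v - g u := by
    intro u v huv
    rw [htel u.val v.val (le_of_lt huv)]
    have hv : f v.val = g v := by
      simp only [hf]
      congr 1
      apply Fin.ext
      simp only
      omega
    have hu : f u.val = g u := by
      simp only [hf]
      congr 1
      apply Fin.ext
      simp only
      omega
    rw [hv, hu]
  -- pair sum identity for Q
  have hQsum : ∑ j ∈ Finset.Icc 1 (n-1), d j ^ 2 * Q j =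
      ∑ u : Fin n, ∑ v : Fin n, (if u.val < v.val then
        w u v * ∑ j ∈ Finset.Icc (u.val+1) v.val, d j ^ 2 else 0) := by
    have step : ∀ j ∈ Finset.Icc 1 (n-1), d j ^ 2 * Q j =
        ∑ u : Fin n, ∑ v : Fin n,
          (if u.val < j ∧ j ≤ v.val then w u v * d j ^ 2 else 0) := by
      intro j hj
      rw [hQ j, Finset.mul_sum]
      rw [Finset.sum_filter]
      apply Finset.sum_congr rfl
      intro u _
      rw [Finset.mul_sum]
      by_cases hu : u.val < j
      · rw [if_pos hu, Finset.sum_filter]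
        apply Finset.sum_congr rfl
        intro v _
        by_cases hv : v.val < j
        · rw [if_neg (by simpa using hv), if_neg (by omega)]
        · rw [if_pos hv, if_pos ⟨hu, by omega⟩]
          ring
      · rw [if_neg hu]
        rw [eq_comm]
        apply Finset.sum_eq_zero
        intro v _
        rw [if_neg (by omega)]
    rw [Finset.sum_congr rfl step]
    rw [Finset.sum_comm]
    apply Finset.sum_congr rfl
    intro u _
    rw [Finset.sum_comm]
    apply Finset.sum_congr rfl
    intro v _
    by_cases huv : u.val < v.val
    · rw [if_pos huv, Finset.mul_sum]
      rw [eq_comm]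
      rw [← Finset.sum_filter]
      have hset : (Finset.Icc 1 (n-1)).filter (fun j => u.val < j ∧ j ≤ v.val)
          = Finset.Icc (u.val+1) v.val := by
        ext j
        simp only [Finset.mem_filter, Finset.mem_Icc]
        have := v.isLt
        omega
      rw [← hset]
    · rw [if_neg huv]
      apply Finset.sum_eq_zero
      intro j hj
      rw [if_neg (by omega)]
  -- the energy
  set E : ℝ := (1/2) * ∑ u, ∑ v, (g u - g v) ^ 2 * π u * lazyWalk G u v with hE
  have hkey : ∑ j ∈ Finset.Icc 1 (n-1), d j ^ 2 * Q j ≤ E := by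
    set A : Fin n → Fin n → ℝ := fun u v =>
      w u v * ∑ j ∈ Finset.Icc (u.val+1) v.val, d j ^ 2 with hA
    have hsymmA : ∑ u : Fin n, ∑ v : Fin n, (if u.val < v.val then A u v else 0)
        = ∑ u : Fin n, ∑ v : Fin n, (if v.val < u.val then A v u else 0) := by
      rw [Finset.sum_comm]
    have hAbound : ∀ u v : Fin n, u.val < v.val →
        A u v ≤ (g u - g v)^2 * w u v := by
      intro u v huv
      have h1 : ∑ j ∈ Finset.Icc (u.val+1) v.val, d j ^ 2 ≤
          (∑ j ∈ Finset.Icc (u.val+1) v.val, d j) ^ 2 := by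
        apply Finset.sum_sq_le_sq_sum_of_nonneg
        intro j hj
        simp only [Finset.mem_Icc] at hj
        exact hdnn j (by omega)
      rw [htel2 u v huv] at h1
      have h2 : (g v - g u)^2 = (g u - g v)^2 := by ring
      rw [h2] at h1
      calc A u v = w u v * ∑ j ∈ Finset.Icc (u.val+1) v.val, d j ^ 2 := rfl
        _ ≤ w u v * (g u - g v)^2 := by
            apply mul_le_mul_of_nonneg_left h1 (hwnn u v)
        _ = (g u - g v)^2 * w u v := by ring
    rw [hQsum]
    have hEexp : E = (1/2) * ∑ u : Fin n, ∑ v : Fin n, (g u - g v)^2 * w u v := by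
      rw [hE]
      congr 1
      apply Finset.sum_congr rfl
      intro u _
      apply Finset.sum_congr rfl
      intro v _
      simp only [hw]
      ring
    rw [hEexp]
    have hhalf : ∑ u : Fin n, ∑ v : Fin n, (if u.val < v.val then A u v else 0)
        = (1/2) * (∑ u : Fin n, ∑ v : Fin n, (if u.val < v.val then A u v else 0)
          + ∑ u : Fin n, ∑ v : Fin n, (if v.val < u.val then A v u else 0)) := by
      rw [← hsymmA]; ring
    rw [hhalf, ← Finset.sum_add_distrib]
    simp_rw [← Finset.sum_add_distrib]
    rw [mul_le_mul_iff_right₀ (by norm_num : (0:ℝ) < 1/2)]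
    apply Finset.sum_le_sum
    intro u _
    apply Finset.sum_le_sum
    intro v _
    rcases lt_trichotomy u.val v.val with h | h | h
    · rw [if_pos h, if_neg (by omega), add_zero]
      exact hAbound u v h
    · rw [if_neg (by omega), if_neg (by omega), add_zero]
      exact mul_nonneg (sq_nonneg _) (hwnn u v)
    · rw [if_neg (by omega), if_pos h, zero_add]
      calc A v u ≤ (g v - g u)^2 * w v u := hAbound v u h
        _ = (g u - g v)^2 * w u v := by rw [← hwsymm]; ring
  -- Cauchy–Schwarz
  have hCS : 1 ≤ (∑ j ∈ Finset.Icc 1 (n-1), d j ^ 2 * Q j) *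
      ∑ j ∈ Finset.Icc 1 (n-1), 1 / Q j := by
    have := Finset.sum_sq_le_sum_mul_sum_of_sq_eq_mul (Finset.Icc 1 (n-1))
      (r := d) (f := fun j => d j ^ 2 * Q j) (g := fun j => 1 / Q j)
      (fun j hj => mul_nonneg (sq_nonneg _) (hQpos j hj).le)
      (fun j hj => le_of_lt (by simpa using div_pos one_pos (hQpos j hj)))
      (fun j hj => by
        have h := hQpos j hj
        field_simp)
    rw [hsum1] at this
    simpa using this
  calc (1:ℝ) ≤ (∑ j ∈ Finset.Icc 1 (n-1), d j ^ 2 * Q j) *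
      ∑ j ∈ Finset.Icc 1 (n-1), 1 / Q j := hCS
    _ ≤ E * ∑ j ∈ Finset.Icc 1 (n-1), 1 / Q j := by
        apply mul_le_mul_of_nonneg_right hkey
        apply Finset.sum_nonneg
        intro j hj
        exact le_of_lt (div_pos one_pos (hQpos j hj))
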